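/- Let S2 be a vertical grading on D_{a1,a2} with a2 > 0 and let r be an integer with r ≥ S2(v) for all v ∈ D2 and r ≥ ⌈a1/a2⌉. Let D' = D_{r·a2−a1,a2} with vertical edges D2' = {v'_1,…,v'_{a2}}, and define the vertical grading φ_r^*S2 on D2' by φ_r^*S2(v'_j) = r − S2(v_{a2+1−j}). Then for any v'_i, v'_j ∈ D2' one has f_{φ_r^*S2}(v̄'_i v'_j) = −f_{S2}(v̄_{a2−j} v_{a2−i}), where v̄'_i v'_j denotes the subpath of D' from v'_i to v'_j with v'_i removed and v̄_{a2−j} v_{a2−i} the subpath of D from v_{a2−j} to v_{a2−i} with v_{a2−j} removed (indices cyclic, v_0 = v_{a2}). -/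

import Mathlib

open scoped Classical
noncomputable section

namespace Dyck

/-- The edges of the maximal Dyck path `D_{a,b}`: `a` horizontal edges
`h_1, …, h_a` (0-indexed here) and `b` vertical edges `v_1, …, v_b`. -/
abbrev Edge (a b : ℕ) := Fin a ⊕ Fin b

/-- The height of the horizontal edge `h_{j+1}` of `D_{a,b}` is `⌊j·b/a⌋`. -/
def ht (a b : ℕ) (j : Fin a) : ℕ := j.1 * b / a

/-- The depth of the vertical edge `v_{j+1}` of `D_{a,b}` is `⌈(j+1)·a/b⌉`. -/
def dep (a b : ℕ) (j : Fin b) : ℕ := ((j.1 + 1) * a + b - 1) / b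

/-- The position (0-indexed) of an edge along the maximal Dyck path `D_{a,b}`:
a horizontal edge `h_{j+1}` is preceded by `j` horizontal edges and by `ht j`
vertical edges; a vertical edge `v_{j+1}` is preceded by `j` vertical edges and
by `dep j` horizontal edges. -/
def pos (a b : ℕ) : Edge a b → ℕ
  | Sum.inl j => j.1 + ht a b j
  | Sum.inr j => j.1 + dep a b j

/-- Cyclic distance from `e` to `f` along the closed loop `D_{a,b}`
(the endpoints `(0,0)` and `(a,b)` are identified). -/
def dd (a b : ℕ) (e f : Edge a b) : ℕ := (pos a b f + (a + b) - pos a b e) % (a + b)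

/-- The (cyclic) subpath of `D_{a,b}` from `e` to `f`, both included. -/
def subpath (a b : ℕ) (e f : Edge a b) : Finset (Edge a b) :=
  Finset.univ.filter fun g => dd a b e g ≤ dd a b e f

/-- The number of horizontal edges in a set of edges. -/
def hcount (a b : ℕ) (s : Finset (Edge a b)) : ℕ := (s.filter fun e => e.isLeft = true).card

/-- The number of vertical edges in a set of edges. -/
def vcount (a b : ℕ) (s : Finset (Edge a b)) : ℕ := (s.filter fun e => e.isRight = true).card

/-- The sum of a horizontal grading over the horizontal edges of a set of edges. -/
def hsum (a b : ℕ) (S1 : Fin a → ℕ) (s : Finset (Edge a b)) : ℕ :=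
  ∑ e ∈ s, Sum.elim S1 (fun _ => 0) e

/-- The sum of a vertical grading over the vertical edges of a set of edges. -/
def vsum (a b : ℕ) (S2 : Fin b → ℕ) (s : Finset (Edge a b)) : ℕ :=
  ∑ e ∈ s, Sum.elim (fun _ => 0) S2 e

/-- The horizontal shadow statistic `f_{S1}` of a set of edges. -/
def fH (a b : ℕ) (S1 : Fin a → ℕ) (s : Finset (Edge a b)) : ℤ :=
  (hsum a b S1 s : ℤ) - (vcount a b s : ℤ)

/-- The vertical shadow statistic `f_{S2}` of a set of edges. -/
def fV (a b : ℕ) (S2 : Fin b → ℕ) (s : Finset (Edge a b)) : ℤ :=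
  (vsum a b S2 s : ℤ) - (hcount a b s : ℤ)

/-- Horizontal grading condition (HGC) for the pair `(h, v)`: there is an edge `e`
with `he` a proper subpath of `hv` and `|(he)_2| = Σ_{h' ∈ (he)_1} S1(h')`. -/
def HGC (a b : ℕ) (S1 : Fin a → ℕ) (h : Fin a) (v : Fin b) : Prop :=
  ∃ e : Edge a b, dd a b (.inl h) e < dd a b (.inl h) (.inr v) ∧
    vcount a b (subpath a b (.inl h) e) = hsum a b S1 (subpath a b (.inl h) e)

/-- Vertical grading condition (VGC) for the pair `(h, v)`: there is an edge `e`
with `ev` a proper subpath of `hv` and `|(ev)_1| = Σ_{v' ∈ (ev)_2} S2(v')`. -/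
def VGC (a b : ℕ) (S2 : Fin b → ℕ) (h : Fin a) (v : Fin b) : Prop :=
  ∃ e : Edge a b, 0 < dd a b (.inl h) e ∧ dd a b (.inl h) e ≤ dd a b (.inl h) (.inr v) ∧
    hcount a b (subpath a b e (.inr v)) = vsum a b S2 (subpath a b e (.inr v))

/-- A pair of gradings `(S1, S2)` on `D_{a,b}` is compatible. -/
def Compatible (a b : ℕ) (S1 : Fin a → ℕ) (S2 : Fin b → ℕ) : Prop :=
  ∀ (h : Fin a) (v : Fin b), HGC a b S1 h v ∨ VGC a b S2 h v

/-- `e` is a "balanced" endpoint for the horizontal edge `h`: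
`|(he)_2| = Σ_{h' ∈ (he)_1} S1(h')`. -/
def balH (a b : ℕ) (S1 : Fin a → ℕ) (h : Fin a) (e : Edge a b) : Prop :=
  vcount a b (subpath a b (.inl h) e) = hsum a b S1 (subpath a b (.inl h) e)

/-- The local shadow `sh(h; S1)`: the vertical edges of the shortest balanced
subpath starting at `h` (all of `D2` if there is none). -/
def shH (a b : ℕ) (S1 : Fin a → ℕ) (h : Fin a) : Finset (Fin b) :=
  Finset.univ.filter fun v =>
    ∀ e : Edge a b, balH a b S1 h e → dd a b (.inl h) (.inr v) ≤ dd a b (.inl h) e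

/-- The shadow `sh(S1) = ⋃_h sh(h; S1)`. -/
def shadowH (a b : ℕ) (S1 : Fin a → ℕ) : Finset (Fin b) :=
  Finset.univ.filter fun v => ∃ h : Fin a, v ∈ shH a b S1 h

/-- The vertical edges removed from `sh(S1)` to form the remote shadow: for each
`d ∈ [1,a]`, the (up to) `S1(h_d)` vertical edges of depth `d` immediately
following `h_d`. -/
def removedH (a b : ℕ) (S1 : Fin a → ℕ) : Finset (Fin b) :=
  Finset.univ.filter fun v => ∃ hd : Fin a, hd.1 + 1 = dep a b v ∧
    (Finset.univ.filter fun v' : Fin b => dep a b v' = dep a b v ∧ v'.1 < v.1).card < S1 hd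

/-- The remote shadow `rsh(S1)`. -/
def rshH (a b : ℕ) (S1 : Fin a → ℕ) : Finset (Fin b) :=
  shadowH a b S1 \ removedH a b S1

/-- `e` is a "balanced" starting point for the vertical edge `v`:
`|(ev)_1| = Σ_{v' ∈ (ev)_2} S2(v')`. -/
def balV (a b : ℕ) (S2 : Fin b → ℕ) (e : Edge a b) (v : Fin b) : Prop :=
  hcount a b (subpath a b e (.inr v)) = vsum a b S2 (subpath a b e (.inr v))

/-- The local shadow `sh(v; S2)`: the horizontal edges of the shortest balanced
subpath ending at `v` (all of `D1` if there is none). -/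
def shV (a b : ℕ) (S2 : Fin b → ℕ) (v : Fin b) : Finset (Fin a) :=
  Finset.univ.filter fun h =>
    ∀ e : Edge a b, balV a b S2 e v → dd a b (.inl h) (.inr v) ≤ dd a b e (.inr v)

/-- The shadow `sh(S2) = ⋃_v sh(v; S2)`. -/
def shadowV (a b : ℕ) (S2 : Fin b → ℕ) : Finset (Fin a) :=
  Finset.univ.filter fun h => ∃ v : Fin b, h ∈ shV a b S2 v

/-- The horizontal edges removed from `sh(S2)` to form the remote shadow: for each
`ℓ ∈ [1,b]`, the (up to) `S2(v_ℓ)` horizontal edges of height `ℓ−1` immediately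
preceding `v_ℓ`. -/
def removedV (a b : ℕ) (S2 : Fin b → ℕ) : Finset (Fin a) :=
  Finset.univ.filter fun h => ∃ vl : Fin b, vl.1 = ht a b h ∧
    (Finset.univ.filter fun h' : Fin a => ht a b h' = ht a b h ∧ h.1 < h'.1).card < S2 vl

/-- The remote shadow `rsh(S2)`. -/
def rshV (a b : ℕ) (S2 : Fin b → ℕ) : Finset (Fin a) :=
  shadowV a b S2 \ removedV a b S2

/-- The support of a grading. -/
def suppH (a : ℕ) (S1 : Fin a → ℕ) : Finset (Fin a) := Finset.univ.filter fun h => S1 h ≠ 0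
def suppV (b : ℕ) (S2 : Fin b → ℕ) : Finset (Fin b) := Finset.univ.filter fun v => S2 v ≠ 0
/-- The horizontal edge `h_t` (1-based, cyclic) of `D_{a,b}` as a 0-based index. -/
def hIdx (a : ℕ) (t : ℕ) (ha : 0 < a) : Fin a := ⟨t % a, Nat.mod_lt _ ha⟩

/-- The vertical edge `v_t` (1-based, cyclic, `v_0 = v_b`) of `D_{a,b}` as a
0-based index. -/
def vIdx (b : ℕ) (t : ℕ) (hb : 0 < b) : Fin b := ⟨(t + b - 1) % b, Nat.mod_lt _ hb⟩

/-- `rsh(S1)_{j;d}` (here `j d : Fin a` are 0-based, denoting the paper's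
`h_{j+1}` and depth `d+1`): the vertical edges `v ∈ rsh(S1)` of depth `d+1` such
that `v ∈ sh(h_{j+1}; S1)` and `h_{j+1}` is the first edge before `v` with this
property. -/
def rshHjd (a b : ℕ) (S1 : Fin a → ℕ) (j d : Fin a) : Finset (Fin b) :=
  (rshH a b S1).filter fun v => dep a b v = d.1 + 1 ∧ v ∈ shH a b S1 j ∧
    ∀ j' : Fin a, v ∈ shH a b S1 j' →
      dd a b (Sum.inl j) (Sum.inr v) ≤ dd a b (Sum.inl j') (Sum.inr v)

/-- `rsh(S2)_{j;ℓ}` (here `j : Fin b` is 0-based, denoting the paper's `v_{j+1}`,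
and `ℓ` is a height): the horizontal edges `h ∈ rsh(S2)` of height `ℓ` such that
`h ∈ sh(v_{j+1}; S2)` and `v_{j+1}` is the first edge after `h` with this
property. -/
def rshVjl (a b : ℕ) (S2 : Fin b → ℕ) (j : Fin b) (l : ℕ) : Finset (Fin a) :=
  (rshV a b S2).filter fun h => ht a b h = l ∧ h ∈ shV a b S2 j ∧
    ∀ j' : Fin b, h ∈ shV a b S2 j' →
      dd a b (Sum.inl h) (Sum.inr j) ≤ dd a b (Sum.inl h) (Sum.inr j')
/-- The reversed complementary vertical grading `φ_r^* S2` on `D' = D_{r·b−a, b}`: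
`φ_r^*S2(v'_j) = r − S2(v_{b+1−j})` (0-based indexing). -/
def phiS2 (b r : ℕ) (S2 : Fin b → ℕ) : Fin b → ℕ :=
  fun k => r - S2 ⟨b - 1 - k.1, by have := k.isLt; omega⟩
lemma mod_two' (b x : ℕ) (h2 : x < 2*b) : (x < b ∧ x % b = x) ∨ (b ≤ x ∧ x % b + b = x) := by
  rcases Nat.lt_or_ge x b with h | h
  · exact Or.inl ⟨h, Nat.mod_eq_of_lt h⟩
  · right
    refine ⟨h, ?_⟩
    rw [Nat.mod_eq_sub_mod h, Nat.mod_eq_of_lt (by omega)]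
    omega

lemma lt_div_add_one_mul (x c : ℕ) (hc : 0 < c) : x < (x / c + 1) * c := by
  have h := Nat.div_add_mod x c
  have h2 : x % c < c := Nat.mod_lt x hc
  calc x = c * (x / c) + x % c := h.symm
    _ < c * (x / c) + c := Nat.add_lt_add_left h2 _
    _ = (x / c + 1) * c := by ring

lemma ceil_ge (x c : ℕ) (hc : 0 < c) : x ≤ ((x + c - 1) / c) * c := by
  have h := lt_div_add_one_mul (x + c - 1) c hc
  have hex : ((x + c - 1) / c + 1) * c = ((x + c - 1) / c) * c + c := by ring
  omega

lemma ceil_lt (x c : ℕ) (hc : 0 < c) : ((x + c - 1) / c) * c < x + c := by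
  have h := Nat.div_mul_le_self (x + c - 1) c
  omega

lemma div_ceil_add (b m x y : ℕ) (hb : 0 < b) (h : x + y = m * b) :
    (x + b - 1) / b + y / b = m := by
  have h1 := ceil_ge x b hb
  have h2 := ceil_lt x b hb
  have h3 : (y / b) * b ≤ y := Nat.div_mul_le_self y b
  have h4 := lt_div_add_one_mul y b hb
  set d := (x + b - 1) / b with hd
  set e := y / b with he
  rcases Nat.lt_trichotomy (d + e) m with hlt | heq | hgt
  · exfalso
    have h5 : (d + e + 1) * b ≤ m * b := mul_le_mul_left (by omega) b
    have hex : (d + e + 1) * b = d * b + e * b + b := by ring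
    have hex2 : (e + 1) * b = e * b + b := by ring
    omega
  · exact heq
  · exfalso
    have h5 : (m + 1) * b ≤ (d + e) * b := mul_le_mul_left (by omega) b
    have hex : (d + e) * b = d * b + e * b := by ring
    have hex2 : (m + 1) * b = m * b + b := by ring
    have hex3 : (e + 1) * b = e * b + b := by ring
    omega

lemma ht_mono (a b : ℕ) {j j' : Fin a} (h : j.1 ≤ j'.1) : ht a b j ≤ ht a b j' :=
  Nat.div_le_div_right (Nat.mul_le_mul_right b h)

lemma dep_mono (a b : ℕ) {j j' : Fin b} (h : j.1 ≤ j'.1) : dep a b j ≤ dep a b j' :=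
  Nat.div_le_div_right (by
    have := mul_le_mul_left (Nat.add_le_add_right h 1) a
    omega)

lemma dep_le (a b : ℕ) (hb : 0 < b) (j : Fin b) : dep a b j ≤ a := by
  unfold dep
  have h1 : (j.1 + 1) * a + b - 1 = (j.1 + 1) * a + (b - 1) := by omega
  rw [h1]
  have h2 : (j.1 + 1) * a ≤ b * a := Nat.mul_le_mul_right a (by omega)
  calc ((j.1 + 1) * a + (b - 1)) / b ≤ (b * a + (b - 1)) / b :=
        Nat.div_le_div_right (by omega)
    _ = a + (b - 1) / b := Nat.mul_add_div hb a (b - 1)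
    _ = a + 0 := by rw [Nat.div_eq_of_lt (by omega)]
    _ = a := rfl

lemma ht_lt (a b : ℕ) (hb : 0 < b) (j : Fin a) : ht a b j < b := by
  have ha : 0 < a := j.pos
  unfold ht
  rw [Nat.div_lt_iff_lt_mul ha]
  have := j.2
  calc j.1 * b < a * b := by
        exact (Nat.mul_lt_mul_right hb).mpr this
    _ = b * a := by ring

lemma pos_lt (a b : ℕ) (hb : 0 < b) (g : Edge a b) : pos a b g < a + b := by
  cases g with
  | inl j => have := ht_lt a b hb j; have := j.2; simp [pos]; omega
  | inr k => have := dep_le a b hb k; have := k.2; simp [pos]; omega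

lemma pos_ne (a b : ℕ) (j : Fin a) (k : Fin b) :
    pos a b (Sum.inl j) ≠ pos a b (Sum.inr k) := by
  have ha : 0 < a := j.pos
  have hb : 0 < b := k.pos
  intro hEq
  simp only [pos] at hEq
  set H := ht a b j with hH
  set D := dep a b k with hD
  -- facts about H
  have f1 : H * a ≤ j.1 * b := by
    rw [hH]; unfold ht; exact Nat.div_mul_le_self _ _
  have f2 : j.1 * b < H * a + a := by
    rw [hH]; unfold ht
    have := lt_div_add_one_mul (j.1 * b) a ha
    have hex : (j.1 * b / a + 1) * a = (j.1 * b / a) * a + a := by ring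
    omega
  -- facts about D
  have f3 : (k.1 + 1) * a ≤ D * b := by
    rw [hD]; unfold dep; exact ceil_ge _ _ hb
  have f4 : D * b < (k.1 + 1) * a + b := by
    rw [hD]; unfold dep; exact ceil_lt _ _ hb
  -- cast to ℤ
  have hEqZ : (j.1 : ℤ) + H = k.1 + D := by exact_mod_cast hEq
  have hEqA : ((j.1 : ℤ) + H) * a = ((k.1 : ℤ) + D) * a := by rw [hEqZ]
  have hEqB : ((j.1 : ℤ) + H) * b = ((k.1 : ℤ) + D) * b := by rw [hEqZ]
  have f1' : (H : ℤ) * a ≤ (j.1 : ℤ) * b := by exact_mod_cast f1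
  have f2' : (j.1 : ℤ) * b < (H : ℤ) * a + a := by exact_mod_cast f2
  have f3' : ((k.1 : ℤ) + 1) * a ≤ (D : ℤ) * b := by exact_mod_cast f3
  have f4' : (D : ℤ) * b < ((k.1 : ℤ) + 1) * a + b := by exact_mod_cast f4
  have g1 : ((j.1 : ℤ) + k.1) * (a + b) < ((j.1 : ℤ) + H) * (a + b) := by nlinarith
  have g2 : ((j.1 : ℤ) + H) * (a + b) < ((j.1 : ℤ) + k.1 + 1) * (a + b) := by nlinarith
  have hab : (0 : ℤ) ≤ (a : ℤ) + b := by positivity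
  have l1 : (j.1 : ℤ) + k.1 < (j.1 : ℤ) + H := lt_of_mul_lt_mul_right g1 hab
  have l2 : (j.1 : ℤ) + H < (j.1 : ℤ) + k.1 + 1 := lt_of_mul_lt_mul_right g2 hab
  omega

lemma pos_inj (a b : ℕ) : Function.Injective (pos a b) := by
  intro f g hfg
  cases f with
  | inl j => cases g with
    | inl j' =>
      rcases Nat.lt_trichotomy j.1 j'.1 with h | h | h
      · exfalso; have := ht_mono a b (le_of_lt h); simp [pos] at hfg; omega
      · exact congrArg Sum.inl (Fin.ext h)
      · exfalso; have := ht_mono a b (le_of_lt h); simp [pos] at hfg; omega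
    | inr k => exact absurd hfg (pos_ne a b j k)
  | inr k => cases g with
    | inl j => exact absurd hfg.symm (pos_ne a b j k)
    | inr k' =>
      rcases Nat.lt_trichotomy k.1 k'.1 with h | h | h
      · exfalso; have := dep_mono a b (le_of_lt h); simp [pos] at hfg; omega
      · exact congrArg Sum.inr (Fin.ext h)
      · exfalso; have := dep_mono a b (le_of_lt h); simp [pos] at hfg; omega

lemma dd_lt (a b : ℕ) (hb : 0 < b) (e f : Edge a b) : dd a b e f < a + b :=
  Nat.mod_lt _ (by omega)

lemma dd_self (a b : ℕ) (e : Edge a b) : dd a b e e = 0 := by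
  unfold dd
  rw [show pos a b e + (a + b) - pos a b e = a + b by omega, Nat.mod_self]

lemma dd_inj (a b : ℕ) (hb : 0 < b) (e : Edge a b) {f g : Edge a b}
    (h : dd a b e f = dd a b e g) : f = g := by
  apply pos_inj a b
  have hf := pos_lt a b hb f
  have hg := pos_lt a b hb g
  have he := pos_lt a b hb e
  unfold dd at h
  have m1 := mod_two' (a+b) (pos a b f + (a + b) - pos a b e) (by omega)
  have m2 := mod_two' (a+b) (pos a b g + (a + b) - pos a b e) (by omega)
  omega

lemma dd_surj (a b : ℕ) (hb : 0 < b) (e : Edge a b) (t : ℕ) (ht : t < a + b) :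
    ∃ g, dd a b e g = t := by
  let φ : Edge a b → Fin (a + b) := fun g => ⟨dd a b e g, dd_lt a b hb e g⟩
  have hinj : Function.Injective φ := by
    intro f g h
    exact dd_inj a b hb e (congrArg Fin.val h)
  have hcard : Fintype.card (Edge a b) = Fintype.card (Fin (a + b)) := by simp
  have hbij : Function.Bijective φ :=
    (Fintype.bijective_iff_injective_and_card φ).mpr ⟨hinj, hcard⟩
  obtain ⟨g, hg⟩ := hbij.surjective ⟨t, ht⟩
  exact ⟨g, congrArg Fin.val hg⟩

lemma card_subpath (a b : ℕ) (hb : 0 < b) (e f : Edge a b) :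
    (subpath a b e f).card = dd a b e f + 1 := by
  rw [show dd a b e f + 1 = (Finset.range (dd a b e f + 1)).card from (Finset.card_range _).symm]
  apply Finset.card_bij (fun g _ => dd a b e g)
  · intro g hg
    simp only [subpath, Finset.mem_filter, Finset.mem_univ, true_and] at hg
    simp only [Finset.mem_range]; omega
  · intro g1 h1 g2 h2 hEq
    exact dd_inj a b hb e hEq
  · intro t htm
    simp only [Finset.mem_range] at htm
    have hDlt := dd_lt a b hb e f
    obtain ⟨g, hg⟩ := dd_surj a b hb e t (by omega)
    refine ⟨g, ?_, hg⟩
    simp only [subpath, Finset.mem_filter, Finset.mem_univ, true_and]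
    omega

lemma hv_card (a b : ℕ) (s : Finset (Edge a b)) : hcount a b s + vcount a b s = s.card := by
  unfold hcount vcount
  rw [show (s.filter fun e => e.isRight = true) = s.filter fun e => ¬ (e.isLeft = true) by
    apply Finset.filter_congr; intro e _; cases e <;> simp]
  exact Finset.card_filter_add_card_filter_not _

/-- dd between two vertical edges, explicit form. -/

lemma ddv_eq (a b : ℕ) (hb : 0 < b) (p q : Fin b) :
    (p.1 ≤ q.1 ∧ dd a b (Sum.inr p) (Sum.inr q) + dep a b p = q.1 - p.1 + dep a b q) ∨
    (q.1 < p.1 ∧ dd a b (Sum.inr p) (Sum.inr q) + dep a b p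
      = q.1 + b - p.1 + (a + dep a b q)) := by
  have hp := pos_lt a b hb (Sum.inr p)
  have hq := pos_lt a b hb (Sum.inr q)
  have hple := dep_le a b hb p
  have hqle := dep_le a b hb q
  have hposp : pos a b (Sum.inr p) = p.1 + dep a b p := rfl
  have hposq : pos a b (Sum.inr q) = q.1 + dep a b q := rfl
  have hm := mod_two' (a + b) (pos a b (Sum.inr q) + (a + b) - pos a b (Sum.inr p)) (by omega)
  unfold dd
  rcases Nat.lt_or_ge q.1 p.1 with h | h
  case _ =>
    right
    refine ⟨h, ?_⟩
    have := dep_mono a b (le_of_lt h)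
    omega
  case _ =>
    left
    refine ⟨h, ?_⟩
    have := dep_mono a b h
    omega

/-- comparison of dd from a vertical edge to vertical edges, versus cyclic index distance -/

lemma mem_iff_cyc (a b : ℕ) (hb : 0 < b) (p q m : Fin b) :
    dd a b (Sum.inr p) (Sum.inr m) ≤ dd a b (Sum.inr p) (Sum.inr q) ↔
    (m.1 + b - p.1) % b ≤ (q.1 + b - p.1) % b := by
  have hA := ddv_eq a b hb p m
  have hB := ddv_eq a b hb p q
  have m1 := mod_two' b (m.1 + b - p.1) (by have := m.2; have := p.2; omega)
  have m2 := mod_two' b (q.1 + b - p.1) (by have := q.2; have := p.2; omega)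
  have hple := dep_le a b hb p
  have hqle := dep_le a b hb q
  have hmle := dep_le a b hb m
  have hmq : (m.1 < q.1 ∧ dep a b m ≤ dep a b q) ∨ (m.1 = q.1 ∧ dep a b m = dep a b q)
      ∨ (q.1 < m.1 ∧ dep a b q ≤ dep a b m) := by
    rcases Nat.lt_trichotomy m.1 q.1 with h | h | h
    · exact Or.inl ⟨h, dep_mono a b (le_of_lt h)⟩
    · exact Or.inr (Or.inl ⟨h, by rw [Fin.ext h]⟩)
    · exact Or.inr (Or.inr ⟨h, dep_mono a b (le_of_lt h)⟩)
  have hbm := m.2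
  have hbq := q.2
  have hbp := p.2
  omega

lemma cyc_add (b p s : ℕ) (hp : p < b) (hs : s < b) : ((p + s) % b + b - p) % b = s := by
  have h1 := mod_two' b (p + s) (by omega)
  have h2 := mod_two' b ((p + s) % b + b - p) (by
    rcases h1 with h | h <;> omega)
  omega

lemma add_cyc (b p m : ℕ) (hp : p < b) (hm : m < b) : (p + (m + b - p) % b) % b = m := by
  have h1 := mod_two' b (m + b - p) (by omega)
  have h2 := mod_two' b (p + (m + b - p) % b) (by rcases h1 with h | h <;> omega)
  omega

lemma filter_subpath (a b : ℕ) (hb : 0 < b) (p q : Fin b) :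
    (subpath a b (Sum.inr p) (Sum.inr q)).filter (fun e => e.isRight = true)
      = (Finset.range ((q.1 + b - p.1) % b + 1)).image
          (fun s => (Sum.inr ⟨(p.1 + s) % b, Nat.mod_lt _ hb⟩ : Edge a b)) := by
  have hT : (q.1 + b - p.1) % b < b := Nat.mod_lt _ hb
  ext e
  simp only [Finset.mem_filter, Finset.mem_image, Finset.mem_range, subpath,
    Finset.mem_univ, true_and]
  constructor
  · rintro ⟨hdd, hr⟩
    cases e with
    | inl j => simp at hr
    | inr m =>
      refine ⟨(m.1 + b - p.1) % b, ?_, ?_⟩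
      · have := (mem_iff_cyc a b hb p q m).mp hdd
        omega
      · congr 1
        apply Fin.ext
        exact add_cyc b p.1 m.1 p.2 m.2
  · rintro ⟨s, hs, rfl⟩
    refine ⟨?_, rfl⟩
    apply (mem_iff_cyc a b hb p q _).mpr
    have hsb : s < b := by omega
    rw [cyc_add b p.1 s p.2 hsb]
    omega

lemma vcount_subpath (a b : ℕ) (hb : 0 < b) (p q : Fin b) :
    vcount a b (subpath a b (Sum.inr p) (Sum.inr q)) = (q.1 + b - p.1) % b + 1 := by
  unfold vcount
  rw [filter_subpath a b hb p q, Finset.card_image_of_injOn, Finset.card_range]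
  intro s hs s' hs' hEq
  simp only [Finset.coe_range, Set.mem_Iio] at hs hs'
  have hT : (q.1 + b - p.1) % b < b := Nat.mod_lt _ hb
  have h1 : (p.1 + s) % b = (p.1 + s') % b := by
    have := Sum.inr.inj hEq
    exact congrArg Fin.val this
  have h2 := cyc_add b p.1 s p.2 (by omega)
  have h3 := cyc_add b p.1 s' p.2 (by omega)
  rw [h1] at h2
  omega

lemma vsum_subpath (a b : ℕ) (hb : 0 < b) (S2 : Fin b → ℕ) (p q : Fin b) :
    vsum a b S2 (subpath a b (Sum.inr p) (Sum.inr q))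
      = ∑ s ∈ Finset.range ((q.1 + b - p.1) % b + 1),
          S2 ⟨(p.1 + s) % b, Nat.mod_lt _ hb⟩ := by
  unfold vsum
  rw [← Finset.sum_filter_of_ne (p := fun e => e.isRight = true)
    (by intro e _ hne; cases e with
        | inl j => simp at hne
        | inr m => simp)]
  rw [filter_subpath a b hb p q, Finset.sum_image]
  · simp
  · intro s hs s' hs' hEq
    simp only [Finset.coe_range, Set.mem_Iio] at hs hs'
    have hT : (q.1 + b - p.1) % b < b := Nat.mod_lt _ hb
    have h1 : (p.1 + s) % b = (p.1 + s') % b := congrArg Fin.val (Sum.inr.inj hEq)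
    have h2 := cyc_add b p.1 s p.2 (by omega)
    have h3 := cyc_add b p.1 s' p.2 (by omega)
    rw [h1] at h2
    omega

lemma dep_idx (a b : ℕ) (hb : 0 < b) (v : Fin b) (y m : ℕ) (h : (v.1 + 1) * a + y = m * b) :
    dep a b v + y / b = m := div_ceil_add b m _ y hb h

lemma fV_sub (a b : ℕ) (hb : 0 < b) (S2 : Fin b → ℕ) (p q : Fin b) :
    fV a b S2 (subpath a b (Sum.inr p) (Sum.inr q) \ {Sum.inr p})
      = (∑ s ∈ Finset.range ((q.1 + b - p.1) % b),
          (S2 ⟨(p.1 + (s + 1)) % b, Nat.mod_lt _ hb⟩ : ℤ))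
        - ((dd a b (Sum.inr p) (Sum.inr q) : ℤ) - (((q.1 + b - p.1) % b : ℕ) : ℤ)) := by
  have hmem : (Sum.inr p : Edge a b) ∈ subpath a b (Sum.inr p) (Sum.inr q) := by
    simp [subpath, dd_self]
  have hcard := card_subpath a b hb (Sum.inr p) (Sum.inr q)
  have hvc := vcount_subpath a b hb p q
  have hvs := vsum_subpath a b hb S2 p q
  have hhv := hv_card a b (subpath a b (Sum.inr p) (Sum.inr q))
  rw [Finset.sdiff_singleton_eq_erase]
  have hH : hcount a b ((subpath a b (Sum.inr p) (Sum.inr q)).erase (Sum.inr p))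
      = hcount a b (subpath a b (Sum.inr p) (Sum.inr q)) := by
    unfold hcount
    rw [Finset.filter_erase, Finset.erase_eq_of_notMem (by simp)]
  have hV : vsum a b S2 ((subpath a b (Sum.inr p) (Sum.inr q)).erase (Sum.inr p))
      + S2 p = vsum a b S2 (subpath a b (Sum.inr p) (Sum.inr q)) := by
    have := Finset.sum_erase_add (subpath a b (Sum.inr p) (Sum.inr q))
      (Sum.elim (fun _ => 0) S2) hmem
    simpa [vsum] using this
  have hpeel : vsum a b S2 (subpath a b (Sum.inr p) (Sum.inr q))
      = (∑ s ∈ Finset.range ((q.1 + b - p.1) % b),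
          S2 ⟨(p.1 + (s + 1)) % b, Nat.mod_lt _ hb⟩) + S2 p := by
    rw [hvs, Finset.sum_range_succ']
    congr 1
    exact congrArg S2 (Fin.ext (by simp [Nat.mod_eq_of_lt p.2]))
  have hTD : (q.1 + b - p.1) % b + 1 ≤ dd a b (Sum.inr p) (Sum.inr q) + 1 := by
    rw [← hvc, ← hcard, ← hhv]
    omega
  have h1 : vsum a b S2 ((subpath a b (Sum.inr p) (Sum.inr q)).erase (Sum.inr p))
      = ∑ s ∈ Finset.range ((q.1 + b - p.1) % b),
          S2 ⟨(p.1 + (s + 1)) % b, Nat.mod_lt _ hb⟩ := by omega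
  have h2 : hcount a b ((subpath a b (Sum.inr p) (Sum.inr q)).erase (Sum.inr p))
      + ((q.1 + b - p.1) % b + 1) = dd a b (Sum.inr p) (Sum.inr q) + 1 := by omega
  unfold fV
  rw [h1]
  push_cast
  omega

lemma Eidx (b i j s T P p : ℕ) (hb : 0 < b)
    (hi1 : 1 ≤ i) (hib : i ≤ b) (hj1 : 1 ≤ j) (hjb : j ≤ b)
    (hp : p = i - 1)
    (hT : (i ≤ j ∧ T = j - i) ∨ (j < i ∧ T = j + b - i))
    (hP : (j = b ∧ P = b - 1) ∨ (j < b ∧ P = b - j - 1))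
    (hs : s < T) :
    b - 1 - ((p + (s + 1)) % b) = (P + (T - 1 - s + 1)) % b := by
  have m2 := mod_two' b (p + (s + 1)) (by omega)
  have m3 := mod_two' b (P + (T - 1 - s + 1)) (by omega)
  omega

lemma Ksum (b r i j T : ℕ) (hb : 0 < b) (S2 : Fin b → ℕ) (hrS : ∀ v, S2 v ≤ r)
    (hi1 : 1 ≤ i) (hib : i ≤ b) (hj1 : 1 ≤ j) (hjb : j ≤ b)
    (p' P : Fin b) (hp' : p'.1 = i - 1)
    (hT : (i ≤ j ∧ T = j - i) ∨ (j < i ∧ T = j + b - i))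
    (hPv : (j = b ∧ P.1 = b - 1) ∨ (j < b ∧ P.1 = b - j - 1)) :
    (∑ s ∈ Finset.range T,
        ((phiS2 b r S2) ⟨(p'.1 + (s + 1)) % b, Nat.mod_lt _ hb⟩ : ℤ))
      = (T : ℤ) * (r : ℤ)
        - ∑ s ∈ Finset.range T, (S2 ⟨(P.1 + (s + 1)) % b, Nat.mod_lt _ hb⟩ : ℤ) := by
  calc (∑ s ∈ Finset.range T,
        ((phiS2 b r S2) ⟨(p'.1 + (s + 1)) % b, Nat.mod_lt _ hb⟩ : ℤ))
      = ∑ s ∈ Finset.range T,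
          ((r : ℤ) - (S2 ⟨(P.1 + (T - 1 - s + 1)) % b, Nat.mod_lt _ hb⟩ : ℤ)) := by
        refine Finset.sum_congr rfl (fun s hs => ?_)
        simp only [Finset.mem_range] at hs
        have hE := Eidx b i j s T P.1 p'.1 hb hi1 hib hj1 hjb hp' hT hPv hs
        unfold phiS2
        rw [Nat.cast_sub (hrS _)]
        exact congrArg (fun x => (r : ℤ) - (S2 x : ℤ)) (Fin.ext hE)
    _ = ∑ s ∈ Finset.range T,
          ((r : ℤ) - (S2 ⟨(P.1 + (s + 1)) % b, Nat.mod_lt _ hb⟩ : ℤ)) :=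
        Finset.sum_range_reflect
          (fun s => (r : ℤ) - (S2 ⟨(P.1 + (s + 1)) % b, Nat.mod_lt _ hb⟩ : ℤ)) _
    _ = (T : ℤ) * (r : ℤ)
        - ∑ s ∈ Finset.range T, (S2 ⟨(P.1 + (s + 1)) % b, Nat.mod_lt _ hb⟩ : ℤ) := by
        rw [Finset.sum_sub_distrib, Finset.sum_const, Finset.card_range, nsmul_eq_mul]

set_option maxHeartbeats 2000000 in
lemma Kdd (a b r i j : ℕ) (hb : 0 < b) (hra : a ≤ r * b)
    (hi1 : 1 ≤ i) (hib : i ≤ b) (hj1 : 1 ≤ j) (hjb : j ≤ b)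
    (p' q' P Q : Fin b)
    (hp' : p'.1 = i - 1) (hq' : q'.1 = j - 1)
    (hPv : (j = b ∧ P.1 = b - 1) ∨ (j < b ∧ P.1 = b - j - 1))
    (hQv : (i = b ∧ Q.1 = b - 1) ∨ (i < b ∧ Q.1 = b - i - 1)) :
    (dd a b (Sum.inr P) (Sum.inr Q) : ℤ)
      + (dd (r * b - a) b (Sum.inr p') (Sum.inr q') : ℤ)
      = (((q'.1 + b - p'.1) % b : ℕ) : ℤ) * (r : ℤ)
        + 2 * (((q'.1 + b - p'.1) % b : ℕ) : ℤ) := by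
  set a' := r * b - a with ha'def
  clear_value a'
  have hda : a' + a = r * b := by omega
  have hDv' := ddv_eq a' b hb p' q'
  have hDv := ddv_eq a b hb P Q
  rcases le_or_gt i j with hij | hij
  · rcases eq_or_lt_of_le hjb with hjB | hjB
    · rcases eq_or_lt_of_le hib with hiB | hiB
      · -- i = b, j = b
        have h0 : dd a b (Sum.inr P) (Sum.inr Q) = 0 := by
          rw [show Q = P from Fin.ext (by omega)]; exact dd_self a b _
        have h0' : dd a' b (Sum.inr p') (Sum.inr q') = 0 := by
          rw [show q' = p' from Fin.ext (by omega)]; exact dd_self a' b _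
        have hT0 : (q'.1 + b - p'.1) % b = 0 := by
          rw [show q' = p' from Fin.ext (by omega)]
          rw [show p'.1 + b - p'.1 = b by omega, Nat.mod_self]
        rw [h0, h0', hT0]
        push_cast
        ring
      · -- i < b, j = b
        have e2 : dep a' b p' + (i * a) / b = i * r :=
          dep_idx a' b hb p' (i * a) (i * r)
            (by rw [show p'.1 + 1 = i by omega, ← mul_add, hda, ← mul_assoc])
        have e1 : dep a' b q' = a' := by
          have := dep_idx a' b hb q' 0 a'
            (by rw [show q'.1 + 1 = b by omega, mul_comm, Nat.add_zero])
          simpa using this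
        have e3 : dep a b P = a := by
          have := dep_idx a b hb P 0 a
            (by rw [show P.1 + 1 = b by omega, mul_comm, Nat.add_zero])
          simpa using this
        have e4 : dep a b Q + (i * a) / b = a :=
          dep_idx a b hb Q (i * a) a
            (by rw [show Q.1 + 1 = b - i by omega, ← add_mul, Nat.sub_add_cancel hib,
              mul_comm])
        have hD2' : dd a' b (Sum.inr p') (Sum.inr q') + dep a' b p' + i
            = b + dep a' b q' := by omega
        have hD2 : dd a b (Sum.inr P) (Sum.inr Q) + dep a b P + i
            = b + (a + dep a b Q) := by omega
        have hT : (q'.1 + b - p'.1) % b = b - i := by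
          have := mod_two' b (q'.1 + b - p'.1) (by omega)
          omega
        rw [hT]
        zify at e1 e2 e3 e4 hD2 hD2' hda
        push_cast [show i ≤ b from hib]
        linarith
    · -- j < b, i ≤ j (so i < b)
      have e1 : dep a' b q' + (j * a) / b = j * r :=
        dep_idx a' b hb q' (j * a) (j * r)
          (by rw [show q'.1 + 1 = j by omega, ← mul_add, hda, ← mul_assoc])
      have e2 : dep a' b p' + (i * a) / b = i * r :=
        dep_idx a' b hb p' (i * a) (i * r)
          (by rw [show p'.1 + 1 = i by omega, ← mul_add, hda, ← mul_assoc])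
      have e3 : dep a b P + (j * a) / b = a :=
        dep_idx a b hb P (j * a) a
          (by rw [show P.1 + 1 = b - j by omega, ← add_mul, Nat.sub_add_cancel hjb,
            mul_comm])
      have e4 : dep a b Q + (i * a) / b = a :=
        dep_idx a b hb Q (i * a) a
          (by rw [show Q.1 + 1 = b - i by omega, ← add_mul, Nat.sub_add_cancel hib,
            mul_comm])
      have hD2' : dd a' b (Sum.inr p') (Sum.inr q') + dep a' b p' + i
          = j + dep a' b q' := by omega
      have hD2 : dd a b (Sum.inr P) (Sum.inr Q) + dep a b P + i
          = j + dep a b Q := by omega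
      have hT : (q'.1 + b - p'.1) % b = j - i := by
        have := mod_two' b (q'.1 + b - p'.1) (by omega)
        omega
      rw [hT]
      zify at e1 e2 e3 e4 hD2 hD2' hda
      push_cast [show i ≤ j from hij]
      linarith
  · rcases eq_or_lt_of_le hib with hiB | hiB
    · -- i = b, j < i
      have e1 : dep a' b q' + (j * a) / b = j * r :=
        dep_idx a' b hb q' (j * a) (j * r)
          (by rw [show q'.1 + 1 = j by omega, ← mul_add, hda, ← mul_assoc])
      have e2 : dep a' b p' = a' := by
        have := dep_idx a' b hb p' 0 a'
          (by rw [show p'.1 + 1 = b by omega, mul_comm, Nat.add_zero])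
        simpa using this
      have e3 : dep a b P + (j * a) / b = a :=
        dep_idx a b hb P (j * a) a
          (by rw [show P.1 + 1 = b - j by omega, ← add_mul,
            Nat.sub_add_cancel (by omega), mul_comm])
      have e4 : dep a b Q = a := by
        have := dep_idx a b hb Q 0 a
          (by rw [show Q.1 + 1 = b by omega, mul_comm, Nat.add_zero])
        simpa using this
      have hD2' : dd a' b (Sum.inr p') (Sum.inr q') + dep a' b p'
          = j + (a' + dep a' b q') := by omega
      have hD2 : dd a b (Sum.inr P) (Sum.inr Q) + dep a b P
          = j + dep a b Q := by omega
      have hT : (q'.1 + b - p'.1) % b = j := by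
        have := mod_two' b (q'.1 + b - p'.1) (by omega)
        omega
      rw [hT]
      zify at e1 e2 e3 e4 hD2 hD2' hda
      push_cast
      linarith
    · -- j < i < b
      have e1 : dep a' b q' + (j * a) / b = j * r :=
        dep_idx a' b hb q' (j * a) (j * r)
          (by rw [show q'.1 + 1 = j by omega, ← mul_add, hda, ← mul_assoc])
      have e2 : dep a' b p' + (i * a) / b = i * r :=
        dep_idx a' b hb p' (i * a) (i * r)
          (by rw [show p'.1 + 1 = i by omega, ← mul_add, hda, ← mul_assoc])
      have e3 : dep a b P + (j * a) / b = a :=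
        dep_idx a b hb P (j * a) a
          (by rw [show P.1 + 1 = b - j by omega, ← add_mul,
            Nat.sub_add_cancel (by omega), mul_comm])
      have e4 : dep a b Q + (i * a) / b = a :=
        dep_idx a b hb Q (i * a) a
          (by rw [show Q.1 + 1 = b - i by omega, ← add_mul,
            Nat.sub_add_cancel (by omega), mul_comm])
      have hD2' : dd a' b (Sum.inr p') (Sum.inr q') + dep a' b p' + i
          = j + b + (a' + dep a' b q') := by omega
      have hD2 : dd a b (Sum.inr P) (Sum.inr Q) + dep a b P + i
          = j + b + (a + dep a b Q) := by omega
      have hT : (q'.1 + b - p'.1) % b = j + b - i := by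
        have := mod_two' b (q'.1 + b - p'.1) (by omega)
        omega
      rw [hT]
      zify at e1 e2 e3 e4 hD2 hD2' hda
      push_cast [show i ≤ j + b by omega]
      linarith

/-- **Shadow statistics and the complementary grading.** For a vertical grading
`S2` on `D_{a,b}` with `b > 0`, `r ≥ max S2` and `r ≥ ⌈a/b⌉`, and any
`1 ≤ i, j ≤ b`, one has `f_{φ_r^*S2}(v̄'_i v'_j) = −f_{S2}(v̄_{b−j} v_{b−i})`
(indices cyclic, `v_0 = v_b`). -/
theorem shadow_statistic_complement (a b r : ℕ) (hb : 0 < b)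
    (S2 : Fin b → ℕ) (hrS : ∀ v, S2 v ≤ r) (hra : a ≤ r * b) :
    ∀ i j : ℕ, 1 ≤ i → i ≤ b → 1 ≤ j → j ≤ b →
      fV (r * b - a) b (phiS2 b r S2)
          (subpath (r * b - a) b (Sum.inr (vIdx b i hb)) (Sum.inr (vIdx b j hb)) \
            {Sum.inr (vIdx b i hb)})
        = - fV a b S2
            (subpath a b (Sum.inr (vIdx b (b - j) hb)) (Sum.inr (vIdx b (b - i) hb)) \
              {Sum.inr (vIdx b (b - j) hb)}) := by
  intro i j hi1 hib hj1 hjb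
  set p' : Fin b := vIdx b i hb with hp'def
  set q' : Fin b := vIdx b j hb with hq'def
  set P : Fin b := vIdx b (b - j) hb with hPdef
  set Q : Fin b := vIdx b (b - i) hb with hQdef
  have hp' : p'.1 = i - 1 := by
    show (i + b - 1) % b = i - 1
    have := mod_two' b (i + b - 1) (by omega)
    omega
  have hq' : q'.1 = j - 1 := by
    show (j + b - 1) % b = j - 1
    have := mod_two' b (j + b - 1) (by omega)
    omega
  have hPv : (j = b ∧ P.1 = b - 1) ∨ (j < b ∧ P.1 = b - j - 1) := by
    have h0 : P.1 = (b - j + b - 1) % b := rfl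
    have h := mod_two' b (b - j + b - 1) (by omega)
    omega
  have hQv : (i = b ∧ Q.1 = b - 1) ∨ (i < b ∧ Q.1 = b - i - 1) := by
    have h0 : Q.1 = (b - i + b - 1) % b := rfl
    have h := mod_two' b (b - i + b - 1) (by omega)
    omega
  clear_value p' q' P Q
  have hTLv : (i ≤ j ∧ (q'.1 + b - p'.1) % b = j - i)
      ∨ (j < i ∧ (q'.1 + b - p'.1) % b = j + b - i) := by
    have h := mod_two' b (q'.1 + b - p'.1) (by omega)
    omega
  have hTRv : (Q.1 + b - P.1) % b = (q'.1 + b - p'.1) % b := by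
    have h := mod_two' b (Q.1 + b - P.1) (by omega)
    omega
  have hkey := Kdd a b r i j hb hra hi1 hib hj1 hjb p' q' P Q hp' hq' hPv hQv
  have hKsum := Ksum b r i j ((q'.1 + b - p'.1) % b) hb S2 hrS hi1 hib hj1 hjb p' P
    hp' hTLv hPv
  rw [fV_sub (r * b - a) b hb (phiS2 b r S2) p' q', fV_sub a b hb S2 P Q, hTRv, hKsum]
  linarith


end Dyck
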